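/- Let (Γ, L) be a strongly connected periodic graph, Φ a periodic realization, and x₀ ∈ V_Γ. If C₂(Γ, Φ, x₀) := sup_{y ∈ V_Γ} (d_Γ(x₀,y) − d_{P_Γ,Φ}(x₀,y)) < 1, then x₀ is P-initial: for every nonzero vertex u of the growth polytope P_Γ there exists a cycle q in Γ/L with ν(q) = u whose support contains the image of x₀. -/

import Mathlib

open Pointwise

/-- An `n`-dimensional periodic graph, presented concretely: since the action of `L ≅ ℤⁿ` on the
vertex/edge sets is free with finite quotient, vertices are `(Fin n → ℤ) × V0` and edges are
translates of finitely many edge classes `E0`; the class `e` joins `(0, srcV e)` to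
`(vec e, tgtV e)` and has weight `wt e > 0`. -/
structure PeriodicGraph (n : ℕ) where
  V0 : Type
  E0 : Type
  fintypeV0 : Fintype V0
  fintypeE0 : Fintype E0
  srcV : E0 → V0
  tgtV : E0 → V0
  vec : E0 → Fin n → ℤ
  wt : E0 → ℕ
  wt_pos : ∀ e, 0 < wt e

namespace PeriodicGraph

variable {n : ℕ}

/-- `Reaches G x y w`: there is a directed walk in `Γ` from `x` to `y` of total weight `w`. -/
inductive Reaches (G : PeriodicGraph n) :
    ((Fin n → ℤ) × G.V0) → ((Fin n → ℤ) × G.V0) → ℕ → Prop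
  | refl (x : (Fin n → ℤ) × G.V0) : Reaches G x x 0
  | tail {x : (Fin n → ℤ) × G.V0} {w : ℕ} (u : Fin n → ℤ) (e : G.E0) :
      Reaches G x (u, G.srcV e) w → Reaches G x (u + G.vec e, G.tgtV e) (w + G.wt e)

/-- `Γ` is strongly connected: any vertex reaches any other by a directed walk. -/
def StronglyConnected (G : PeriodicGraph n) : Prop :=
  ∀ x y : (Fin n → ℤ) × G.V0, ∃ w : ℕ, G.Reaches x y w

/-- The weighted graph distance `d_Γ(x,y)` (the minimal weight of a walk from `x` to `y`). -/
noncomputable def dist (G : PeriodicGraph n) (x y : (Fin n → ℤ) × G.V0) : ℕ :=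
  sInf {w : ℕ | G.Reaches x y w}

/-- A cycle in the quotient graph `Γ/L`: a nonempty chained list of edge classes, closed, whose
visited vertices are pairwise distinct. -/
def IsQCycle (G : PeriodicGraph n) (l : List G.E0) : Prop :=
  ∃ h : l ≠ [], l.Chain' (fun e f => G.tgtV e = G.srcV f) ∧
    G.tgtV (l.getLast h) = G.srcV (l.head h) ∧ (l.map G.tgtV).Nodup

/-- The net translation vector `μ(⟨q⟩)` of a quotient walk. -/
def qvec (G : PeriodicGraph n) (l : List G.E0) : Fin n → ℤ := (l.map G.vec).sum

/-- The total weight `w(q)` of a quotient walk. -/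
def qwt (G : PeriodicGraph n) (l : List G.E0) : ℕ := (l.map G.wt).sum

/-- The normalization `ν(q) = μ(⟨q⟩)/w(q)` of a quotient cycle. -/
noncomputable def nu (G : PeriodicGraph n) (l : List G.E0) : Fin n → ℝ :=
  (G.qwt l : ℝ)⁻¹ • fun i => (G.qvec l i : ℝ)

/-- The growth polytope `P_Γ`: the convex hull of `0` together with the normalized translation
vectors of all cycles of `Γ/L`. -/
noncomputable def growthPolytope (G : PeriodicGraph n) : Set (Fin n → ℝ) :=
  convexHull ℝ (insert 0 {x : Fin n → ℝ | ∃ l : List G.E0, G.IsQCycle l ∧ x = G.nu l})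

/-- The gauge `d_P(y) = inf {t ≥ 0 | y ∈ t·P}` of a set `P`. -/
noncomputable def pgauge {n : ℕ} (P : Set (Fin n → ℝ)) (y : Fin n → ℝ) : ℝ :=
  sInf {t : ℝ | 0 ≤ t ∧ y ∈ t • P}

/-- A periodic realization `Φ : V_Γ → L ⊗ ℝ`, i.e. `Φ(u + x) = u + Φ(x)` for `u ∈ L`. -/
def IsRealization (G : PeriodicGraph n) (Φ : (Fin n → ℤ) × G.V0 → Fin n → ℝ) : Prop :=
  ∀ (u : Fin n → ℤ) (x : (Fin n → ℤ) × G.V0),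
    Φ (u + x.1, x.2) = (fun i => (u i : ℝ)) + Φ x

/-- `x₀` is `P`-initial: every nonzero vertex (extreme point) `u` of `P_Γ` is the normalized
vector of some cycle of `Γ/L` whose support contains the image of `x₀`. -/
def PInitial (G : PeriodicGraph n) (x₀ : (Fin n → ℤ) × G.V0) : Prop :=
  ∀ u ∈ Set.extremePoints ℝ G.growthPolytope, u ≠ 0 →
    ∃ l : List G.E0, G.IsQCycle l ∧ G.nu l = u ∧ x₀.2 ∈ l.map G.tgtV

end PeriodicGraph

/-- A function `ℕ → ℕ` is of quasi-polynomial type if it eventually agrees with a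
quasi-polynomial. -/
def IsQuasiPolynomialType (f : ℕ → ℕ) : Prop :=
  ∃ Np : ℕ, 0 < Np ∧ ∃ Q : ℕ → Polynomial ℚ, ∃ M : ℕ,
    ∀ i : ℕ, M ≤ i → (f i : ℚ) = (Q (i % Np)).eval (i : ℚ)

section Aux

namespace PeriodicGraph

variable {n : ℕ} (G : PeriodicGraph n)

/-- Walks in the quotient graph. -/
inductive QWalk : G.V0 → G.V0 → List G.E0 → Prop
  | nil (v : G.V0) : QWalk v v []
  | cons (e : G.E0) {v : G.V0} {l : List G.E0} :
      QWalk (G.tgtV e) v l → QWalk (G.srcV e) v (e :: l)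

variable {G}

lemma QWalk.append {a b c : G.V0} {l₁ l₂ : List G.E0} (h₁ : G.QWalk a b l₁)
    (h₂ : G.QWalk b c l₂) : G.QWalk a c (l₁ ++ l₂) := by
  induction h₁ with
  | nil v => simpa using h₂
  | cons e h ih => exact QWalk.cons e (ih h₂)

lemma QWalk.split : ∀ (l₁ : List G.E0) {a c : G.V0} {l₂ : List G.E0},
    G.QWalk a c (l₁ ++ l₂) → ∃ b, G.QWalk a b l₁ ∧ G.QWalk b c l₂
  | [], a, c, l₂, h => ⟨a, QWalk.nil a, h⟩
  | e :: t, a, c, l₂, h => by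
    rw [List.cons_append] at h
    cases h with
    | cons _ h' =>
      obtain ⟨b, hb1, hb2⟩ := QWalk.split t h'
      exact ⟨b, QWalk.cons e hb1, hb2⟩

lemma QWalk.head_src {a c : G.V0} {l : List G.E0} (h : G.QWalk a c l) (hne : l ≠ []) :
    G.srcV (l.head hne) = a := by
  cases h with
  | nil => exact absurd rfl hne
  | cons e h' => rfl

lemma QWalk.eq_of_nil {a v : G.V0} (h : G.QWalk a v []) : a = v := by
  cases h; rfl

lemma QWalk.last_tgt {a c : G.V0} {l : List G.E0} (h : G.QWalk a c l) (hne : l ≠ []) :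
    G.tgtV (l.getLast hne) = c := by
  induction h with
  | nil => exact absurd rfl hne
  | @cons e v l h' ih =>
    cases l with
    | nil => simpa using h'.eq_of_nil
    | cons f t =>
      rw [List.getLast_cons (by simp)]
      exact ih (by simp)

lemma QWalk.chain' {a c : G.V0} {l : List G.E0} (h : G.QWalk a c l) :
    l.Chain' (fun e f => G.tgtV e = G.srcV f) := by
  induction h with
  | nil v => exact List.isChain_nil
  | @cons e v l h' ih =>
    refine List.isChain_cons.2 ⟨?_, ih⟩
    intro f hf
    cases l with
    | nil => simp at hf
    | cons g t =>
      simp only [List.head?_cons, Option.mem_def, Option.some.injEq] at hf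
      subst hf
      exact (h'.head_src (by simp)).symm

variable (G)

lemma qvec_append (l₁ l₂ : List G.E0) : G.qvec (l₁ ++ l₂) = G.qvec l₁ + G.qvec l₂ := by
  simp [PeriodicGraph.qvec]

lemma qwt_append (l₁ l₂ : List G.E0) : G.qwt (l₁ ++ l₂) = G.qwt l₁ + G.qwt l₂ := by
  simp [PeriodicGraph.qwt]

lemma qwt_pos {l : List G.E0} (hne : l ≠ []) : 0 < G.qwt l := by
  cases l with
  | nil => exact absurd rfl hne
  | cons e t =>
    have := G.wt_pos e
    simp only [PeriodicGraph.qwt, List.map_cons, List.sum_cons]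
    omega

variable {G}

lemma reaches_qwalk {x y : (Fin n → ℤ) × G.V0} {w : ℕ} (h : G.Reaches x y w) :
    ∃ l : List G.E0, G.QWalk x.2 y.2 l ∧ G.qwt l = w ∧ x.1 + G.qvec l = y.1 := by
  induction h with
  | refl => exact ⟨[], QWalk.nil _, by simp [PeriodicGraph.qwt], by simp [PeriodicGraph.qvec]⟩
  | tail u e h ih =>
    obtain ⟨l, hw, hwt, hv⟩ := ih
    refine ⟨l ++ [e], hw.append (QWalk.cons e (QWalk.nil _)), ?_, ?_⟩
    · rw [qwt_append, hwt]; simp [PeriodicGraph.qwt]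
    · rw [qvec_append, ← add_assoc, hv]
      simp [PeriodicGraph.qvec]

end PeriodicGraph

end Aux

namespace PeriodicGraph

variable {n : ℕ} {G : PeriodicGraph n}

lemma take_getLast {α : Type*} (l : List α) (k : ℕ) (hk : k < l.length)
    (h : l.take (k+1) ≠ []) : (l.take (k+1)).getLast h = l.get ⟨k, hk⟩ := by
  rw [List.getLast_eq_getElem, List.get_eq_getElem]
  have hlen : (l.take (k+1)).length - 1 = k := by rw [List.length_take]; omega
  simp only [List.getElem_take, hlen]

lemma decompose : ∀ (m : ℕ) (v : G.V0) (l : List G.E0), l.length ≤ m → l ≠ [] →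
    G.QWalk v v l →
    ∃ L : List (List G.E0), (∀ c ∈ L, G.IsQCycle c) ∧
      (L.map G.qvec).sum = G.qvec l ∧ (L.map G.qwt).sum = G.qwt l ∧
      ∃ c ∈ L, v ∈ c.map G.tgtV := by
  intro m
  induction m with
  | zero =>
    intro v l hl hne _
    cases l with
    | nil => exact absurd rfl hne
    | cons e t => simp at hl
  | succ m ih =>
    intro v l hlen hne hw
    by_cases hnd : (l.map G.tgtV).Nodup
    · refine ⟨[l], ?_, by simp, by simp, ⟨l, by simp, ?_⟩⟩
      · intro c hc
        rw [List.mem_singleton] at hc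
        subst hc
        exact ⟨hne, hw.chain', by rw [hw.last_tgt hne, hw.head_src hne], hnd⟩
      · rw [← hw.last_tgt hne]
        exact List.mem_map_of_mem (List.getLast_mem hne)
    · -- find a repeated visited vertex
      rw [List.nodup_iff_injective_get, Function.not_injective_iff] at hnd
      obtain ⟨a, b, hab, hne'⟩ := hnd
      have hablt : a.1 ≠ b.1 := fun h => hne' (Fin.ext h)
      have ha2 : a.1 < l.length := by have := a.2; simpa using this
      have hb2 : b.1 < l.length := by have := b.2; simpa using this
      obtain ⟨i, j, hil, hjl, hij, htt⟩ : ∃ i j, ∃ (hi : i < l.length) (hj : j < l.length),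
          i < j ∧ G.tgtV (l.get ⟨i, hi⟩) = G.tgtV (l.get ⟨j, hj⟩) := by
        rcases lt_or_gt_of_ne hablt with h | h
        · exact ⟨a.1, b.1, ha2, hb2, h, by
            simpa [List.get_eq_getElem, List.getElem_map] using hab⟩
        · exact ⟨b.1, a.1, hb2, ha2, h, by
            simpa [List.get_eq_getElem, List.getElem_map] using hab.symm⟩
      set A := l.take (i+1) with hA
      set AB := l.take (j+1) with hAB
      set D := l.drop (j+1) with hD
      set B := AB.drop (i+1) with hB
      have hABlen : AB.length = j + 1 := by rw [hAB, List.length_take]; omega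
      have hAlen : A.length = i + 1 := by rw [hA, List.length_take]; omega
      have hBlen : B.length = j - i := by rw [hB, List.length_drop, hABlen]; omega
      have hAne : A ≠ [] := by
        rw [← List.length_pos_iff_ne_nil]; omega
      have hABne : AB ≠ [] := by
        rw [← List.length_pos_iff_ne_nil]; omega
      have hBne : B ≠ [] := by
        rw [← List.length_pos_iff_ne_nil]; omega
      have hAeq : AB.take (i+1) = A := by
        rw [hAB, hA, List.take_take]
        congr 1
        omega
      have hABsplit : A ++ B = AB := by rw [← hAeq, hB, List.take_append_drop]
      have hlsplit : l = AB ++ D := (List.take_append_drop _ _).symm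
      obtain ⟨b0, hABw, hDw⟩ := QWalk.split AB (by rw [← hlsplit]; exact hw)
      obtain ⟨a0, hAw, hBw⟩ := QWalk.split A (by rw [hABsplit]; exact hABw)
      have hAlast : A.getLast hAne = l.get ⟨i, hil⟩ := take_getLast l i hil hAne
      have hABlast : AB.getLast hABne = l.get ⟨j, hjl⟩ := take_getLast l j hjl hABne
      have ha0 : a0 = G.tgtV (l.get ⟨i, hil⟩) := by
        rw [← hAw.last_tgt hAne, hAlast]
      have hb0 : b0 = G.tgtV (l.get ⟨j, hjl⟩) := by
        rw [← hABw.last_tgt hABne, hABlast]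
      have hab0 : a0 = b0 := by rw [ha0, hb0, htt]
      have hDw' : G.QWalk a0 v D := by rwa [hab0]
      have hBw' : G.QWalk a0 a0 B := by rwa [← hab0] at hBw
      have hADw : G.QWalk v v (A ++ D) := hAw.append hDw'
      have hADne : A ++ D ≠ [] := by
        intro h
        rw [List.append_eq_nil_iff] at h
        exact hAne h.1
      have hADlen : (A ++ D).length ≤ m := by
        rw [List.length_append, hAlen, hD, List.length_drop]; omega
      have hBlen' : B.length ≤ m := by omega
      obtain ⟨Lr, hr1, hr2, hr3, c0, hc0, hc0v⟩ := ih v (A ++ D) hADlen hADne hADw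
      obtain ⟨Lb, hq1, hq2, hq3, -⟩ := ih a0 B hBlen' hBne hBw'
      refine ⟨Lr ++ Lb, ?_, ?_, ?_, ⟨c0, List.mem_append_left _ hc0, hc0v⟩⟩
      · intro c hc
        rcases List.mem_append.mp hc with h | h
        exacts [hr1 c h, hq1 c h]
      · rw [List.map_append, List.sum_append, hr2, hq2]
        have hl2 : l = (A ++ B) ++ D := by rw [hABsplit, ← hlsplit]
        rw [hl2, qvec_append, qvec_append, qvec_append]
        abel
      · rw [List.map_append, List.sum_append, hr3, hq3]
        have hl2 : l = (A ++ B) ++ D := by rw [hABsplit, ← hlsplit]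
        rw [hl2, qwt_append, qwt_append, qwt_append]
        omega

end PeriodicGraph

section ConvexAux

variable {E : Type*} [AddCommGroup E] [Module ℝ E]

lemma listSmulSum (a : ℝ) (l : List E) : (l.map fun x => a • x).sum = a • l.sum := by
  induction l with
  | nil => simp
  | cons x t ih => simp [ih, smul_add]

lemma comboMem {s : Set E} (hs : Convex ℝ s) :
    ∀ l : List (ℝ × E), l ≠ [] → (∀ p ∈ l, 0 < p.1 ∧ p.2 ∈ s) →
      ((l.map Prod.fst).sum)⁻¹ • (l.map fun p => p.1 • p.2).sum ∈ s := by
  intro l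
  induction l with
  | nil => intro h; exact absurd rfl h
  | cons p rest ih =>
    intro _ hmem
    obtain ⟨hp, hps⟩ := hmem p List.mem_cons_self
    rcases eq_or_ne rest [] with hr | hr
    · subst hr
      simp only [List.map_cons, List.map_nil, List.sum_cons, List.sum_nil, add_zero]
      rw [inv_smul_smul₀ hp.ne']
      exact hps
    · have hT : 0 < (rest.map Prod.fst).sum := by
        refine List.sum_pos _ (fun x hx => ?_) (by simpa using hr)
        obtain ⟨q, hq, rfl⟩ := List.mem_map.mp hx
        exact (hmem q (List.mem_cons_of_mem _ hq)).1
      have hy := ih hr (fun q hq => hmem q (List.mem_cons_of_mem _ hq))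
      set T := (rest.map Prod.fst).sum with hTdef
      set y := T⁻¹ • (rest.map fun p => p.1 • p.2).sum with hydef
      have hsum : (rest.map fun p => p.1 • p.2).sum = T • y := (smul_inv_smul₀ hT.ne' _).symm
      rw [List.map_cons, List.sum_cons, List.map_cons, List.sum_cons, hsum]
      have hpt : 0 < p.1 + T := by linarith
      have key : (p.1 + T)⁻¹ • (p.1 • p.2 + T • y)
          = (p.1/(p.1+T)) • p.2 + (T/(p.1+T)) • y := by
        rw [smul_add, ← mul_smul, ← mul_smul, div_eq_inv_mul, div_eq_inv_mul]
      rw [key]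
      refine hs hps hy (by positivity) (by positivity) ?_
      field_simp

lemma extremeCombo {s : Set E} (hs : Convex ℝ s) {u : E}
    (hu : u ∈ Set.extremePoints ℝ s) :
    ∀ (m : ℕ) (l : List (ℝ × E)), l.length ≤ m → (∀ p ∈ l, 0 < p.1 ∧ p.2 ∈ s) →
      (l.map Prod.fst).sum = 1 → (l.map fun p => p.1 • p.2).sum = u → ∀ p ∈ l, p.2 = u := by
  intro m
  induction m with
  | zero =>
    intro l hl _ _ _ p hp
    cases l with
    | nil => simp at hp
    | cons a t => simp at hl
  | succ m ih =>
    intro l hlen hmem hsum hcomb p hp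
    cases l with
    | nil => simp at hp
    | cons q rest =>
      obtain ⟨hq, hqs⟩ := hmem q List.mem_cons_self
      rw [List.map_cons, List.sum_cons] at hsum hcomb
      rcases eq_or_ne rest [] with hr | hr
      · subst hr
        simp only [List.map_nil, List.sum_nil, add_zero] at hsum hcomb
        rw [List.mem_singleton] at hp
        subst hp
        rw [hsum, one_smul] at hcomb
        exact hcomb
      · have hT : 0 < (rest.map Prod.fst).sum := by
          refine List.sum_pos _ (fun x hx => ?_) (by simpa using hr)
          obtain ⟨r, hrr, rfl⟩ := List.mem_map.mp hx
          exact (hmem r (List.mem_cons_of_mem _ hrr)).1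
        set T := (rest.map Prod.fst).sum with hTdef
        set y := T⁻¹ • (rest.map fun p => p.1 • p.2).sum with hydef
        have hys : y ∈ s := comboMem hs rest hr (fun r hrr => hmem r (List.mem_cons_of_mem _ hrr))
        have hsum' : (rest.map fun p => p.1 • p.2).sum = T • y := (smul_inv_smul₀ hT.ne' _).symm
        have hseg : u ∈ openSegment ℝ q.2 y := by
          refine ⟨q.1, T, hq, hT, hsum, ?_⟩
          rw [hsum'] at hcomb
          exact hcomb
        obtain ⟨hq2, hy2⟩ := (mem_extremePoints.1 hu).2 _ hqs _ hys hseg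
        rcases List.mem_cons.mp hp with hp | hp
        · rw [hp]; exact hq2
        · have hres := ih (rest.map fun r => (T⁻¹ * r.1, r.2))
            (by simpa using Nat.le_of_succ_le_succ hlen)
            (fun p' hp' => by
              obtain ⟨r, hrr, rfl⟩ := List.mem_map.mp hp'
              exact ⟨mul_pos (inv_pos.mpr hT) (hmem r (List.mem_cons_of_mem _ hrr)).1,
                (hmem r (List.mem_cons_of_mem _ hrr)).2⟩)
            (by
              rw [List.map_map]
              have : (Prod.fst ∘ fun r : ℝ × E => (T⁻¹ * r.1, r.2)) = fun r => T⁻¹ * r.1 := rfl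
              rw [this, List.sum_map_mul_left, inv_mul_cancel₀ hT.ne'])
            (by
              rw [List.map_map]
              have : ((fun p : ℝ × E => p.1 • p.2) ∘ fun r : ℝ × E => (T⁻¹ * r.1, r.2))
                  = fun r : ℝ × E => T⁻¹ • (r.1 • r.2) := by
                funext r; simp [mul_smul]
              rw [this]
              have h2 : (fun r : ℝ × E => T⁻¹ • (r.1 • r.2))
                  = (fun x => T⁻¹ • x) ∘ (fun r : ℝ × E => r.1 • r.2) := rfl
              rw [h2, ← List.map_map, listSmulSum, ← hydef, hy2])
          have := hres (T⁻¹ * p.1, p.2) (List.mem_map_of_mem hp)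
          exact this
          
end ConvexAux

/-- Coordinatewise integer cast as an additive monoid hom. -/
def intCastPi (n : ℕ) : (Fin n → ℤ) →+ (Fin n → ℝ) where
  toFun v := fun i => (v i : ℝ)
  map_zero' := by funext i; simp
  map_add' := by intro a b; funext i; simp

/-- If `C₂(Γ, Φ, x₀) = sup_y (d_Γ(x₀,y) − d_{P_Γ,Φ}(x₀,y)) < 1` (expressed by
a bound `c < 1`), then `x₀` is `P`-initial. -/
theorem pInitial_of_C2_lt_one {n : ℕ} (G : PeriodicGraph n) (hsc : G.StronglyConnected)
    (Φ : (Fin n → ℤ) × G.V0 → Fin n → ℝ) (hΦ : G.IsRealization Φ)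
    (x₀ : (Fin n → ℤ) × G.V0)
    (hC2 : ∃ c : ℝ, c < 1 ∧ ∀ y : (Fin n → ℤ) × G.V0,
      (G.dist x₀ y : ℝ) - PeriodicGraph.pgauge G.growthPolytope (Φ y - Φ x₀) ≤ c) :
    G.PInitial x₀ := by
  obtain ⟨c, hc1, hc⟩ := hC2
  intro u hu hu0
  have hconv : Convex ℝ G.growthPolytope := convex_convexHull ℝ _
  have huP : u ∈ G.growthPolytope := hu.1
  have husub : u ∈ insert (0 : Fin n → ℝ) {x | ∃ l : List G.E0, G.IsQCycle l ∧ x = G.nu l} :=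
    extremePoints_convexHull_subset hu
  rcases Set.mem_insert_iff.mp husub with h0 | hmem
  · exact absurd h0 hu0
  obtain ⟨l₀, hcyc₀, hequ⟩ := hmem
  obtain ⟨hne₀, -⟩ := id hcyc₀
  have hw₀ : 0 < G.qwt l₀ := G.qwt_pos hne₀
  have hw₀R : (0:ℝ) < (G.qwt l₀ : ℝ) := by exact_mod_cast hw₀
  set μ₀R : Fin n → ℝ := intCastPi n (G.qvec l₀) with hμdef
  have hμu : μ₀R = (G.qwt l₀ : ℝ) • u := by
    rw [hequ]
    show intCastPi n (G.qvec l₀) = (G.qwt l₀ : ℝ) • G.nu l₀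
    unfold PeriodicGraph.nu
    rw [smul_inv_smul₀ hw₀R.ne']
    rfl
  set y : (Fin n → ℤ) × G.V0 := (G.qvec l₀ + x₀.1, x₀.2) with hydef
  have hΦy : Φ y - Φ x₀ = μ₀R := by
    have h := hΦ (G.qvec l₀) x₀
    rw [hydef, h]
    exact add_sub_cancel_right _ _
  have hgauge : PeriodicGraph.pgauge G.growthPolytope μ₀R ≤ (G.qwt l₀ : ℝ) := by
    apply csInf_le ⟨0, fun t ht => ht.1⟩
    exact ⟨le_of_lt hw₀R, by rw [hμu]; exact Set.smul_mem_smul_set huP⟩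
  have hd := hc y
  rw [hΦy] at hd
  have hdlt : (G.dist x₀ y : ℝ) < ((G.qwt l₀ + 1 : ℕ) : ℝ) := by push_cast; linarith
  have hdn : G.dist x₀ y ≤ G.qwt l₀ := Nat.lt_succ_iff.mp (by exact_mod_cast hdlt)
  have hre : G.Reaches x₀ y (G.dist x₀ y) := Nat.sInf_mem (hsc x₀ y)
  obtain ⟨lw, hqw, hwt, hv⟩ := PeriodicGraph.reaches_qwalk hre
  have hqw' : G.QWalk x₀.2 x₀.2 lw := hqw
  have hv' : x₀.1 + G.qvec lw = G.qvec l₀ + x₀.1 := hv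
  have hvec : G.qvec lw = G.qvec l₀ := by
    rw [add_comm (G.qvec l₀) x₀.1] at hv'
    exact add_left_cancel hv'
  have hμ0 : μ₀R ≠ 0 := by
    rw [hμu]
    intro h
    rcases smul_eq_zero.mp h with h' | h'
    · exact hw₀R.ne' h'
    · exact hu0 h'
  have hlwne : lw ≠ [] := by
    intro h
    apply hμ0
    rw [hμdef, ← hvec, h]
    show intCastPi n (G.qvec []) = 0
    have : G.qvec ([] : List G.E0) = 0 := by simp [PeriodicGraph.qvec]
    rw [this, map_zero]
  obtain ⟨L, hLcyc, hLvec, hLwt, c₀, hc₀L, hc₀v⟩ :=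
    PeriodicGraph.decompose lw.length x₀.2 lw le_rfl hlwne hqw'
  -- total weight of the cycles is at most the weight of `l₀`
  have hdw : (L.map G.qwt).sum ≤ G.qwt l₀ := by rw [hLwt, hwt]; exact hdn
  have hsumvec : (L.map fun cl => intCastPi n (G.qvec cl)).sum = μ₀R := by
    have h := map_list_sum (intCastPi n) (L.map G.qvec)
    rw [List.map_map] at h
    have h' : (L.map fun cl => intCastPi n (G.qvec cl)) = L.map (⇑(intCastPi n) ∘ G.qvec) := rfl
    rw [h', ← h, hLvec, hvec]
  -- build the convex combination
  set w₀ : ℝ := (G.qwt l₀ : ℝ) with hw₀def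
  set dR : ℝ := ((L.map G.qwt).sum : ℝ) with hdRdef
  have hdRw : dR ≤ w₀ := by rw [hdRdef, hw₀def]; exact_mod_cast hdw
  set tpad : ℝ := 1 - dR / w₀ with htpad
  have htpad0 : 0 ≤ tpad := by
    rw [htpad, sub_nonneg]
    exact div_le_one_of_le₀ hdRw hw₀R.le
  set body : List (ℝ × (Fin n → ℝ)) :=
    L.map fun cl => ((G.qwt cl : ℝ) / w₀, G.nu cl) with hbody
  set pairs : List (ℝ × (Fin n → ℝ)) :=
    (if tpad = 0 then [] else [(tpad, (0 : Fin n → ℝ))]) ++ body with hpairs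
  have hbodyfst : (body.map Prod.fst).sum = dR / w₀ := by
    rw [hbody, List.map_map]
    have h1 : (Prod.fst ∘ fun cl : List G.E0 => ((G.qwt cl : ℝ) / w₀, G.nu cl))
        = fun cl => (G.qwt cl : ℝ) * w₀⁻¹ := by
      funext cl; simp [div_eq_mul_inv]
    rw [h1, List.sum_map_mul_right]
    have h2 : (L.map fun cl => ((G.qwt cl : ℕ) : ℝ)).sum = dR := by
      rw [hdRdef, Nat.cast_list_sum, List.map_map]
      rfl
    rw [h2, div_eq_mul_inv]
  have hsum1 : (pairs.map Prod.fst).sum = 1 := by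
    rw [hpairs, List.map_append, List.sum_append, hbodyfst]
    by_cases h : tpad = 0
    · rw [if_pos h]
      simp only [List.map_nil, List.sum_nil, zero_add]
      have := h
      rw [htpad] at this
      linarith [this]
    · rw [if_neg h]
      simp only [List.map_cons, List.map_nil, List.sum_cons, List.sum_nil, add_zero]
      rw [htpad]
      ring
  have hcomb : (pairs.map fun p => p.1 • p.2).sum = u := by
    rw [hpairs, List.map_append, List.sum_append]
    have hpad : ((if tpad = 0 then ([] : List (ℝ × (Fin n → ℝ))) else [(tpad, 0)]).map
        fun p => p.1 • p.2).sum = 0 := by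
      by_cases h : tpad = 0
      · rw [if_pos h]; simp
      · rw [if_neg h]; simp
    rw [hpad, zero_add, hbody, List.map_map]
    have h1 : ∀ cl ∈ L, ((fun p : ℝ × (Fin n → ℝ) => p.1 • p.2) ∘
        fun cl : List G.E0 => ((G.qwt cl : ℝ) / w₀, G.nu cl)) cl
        = w₀⁻¹ • intCastPi n (G.qvec cl) := by
      intro cl hcl
      obtain ⟨hclne, -⟩ := id (hLcyc cl hcl)
      have hqcl : (0:ℝ) < (G.qwt cl : ℝ) := by exact_mod_cast G.qwt_pos hclne
      show ((G.qwt cl : ℝ) / w₀) • G.nu cl = w₀⁻¹ • intCastPi n (G.qvec cl)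
      unfold PeriodicGraph.nu
      rw [smul_smul]
      have : (G.qwt cl : ℝ) / w₀ * (G.qwt cl : ℝ)⁻¹ = w₀⁻¹ := by
        field_simp
      rw [this]
      rfl
    rw [List.map_congr_left h1]
    have h2 : (L.map fun cl => w₀⁻¹ • intCastPi n (G.qvec cl))
        = (L.map fun cl => intCastPi n (G.qvec cl)).map fun x => w₀⁻¹ • x := by
      rw [List.map_map]
      rfl
    rw [h2, listSmulSum, hsumvec, hμu]
    exact inv_smul_smul₀ hw₀R.ne' u
  have hmem : ∀ p ∈ pairs, 0 < p.1 ∧ p.2 ∈ G.growthPolytope := by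
    intro p hp
    rw [hpairs] at hp
    rcases List.mem_append.mp hp with h | h
    · by_cases h' : tpad = 0
      · rw [if_pos h'] at h; simp at h
      · rw [if_neg h'] at h
        rw [List.mem_singleton] at h
        subst h
        refine ⟨lt_of_le_of_ne htpad0 (Ne.symm h'), ?_⟩
        exact subset_convexHull ℝ _ (Set.mem_insert _ _)
    · rw [hbody] at h
      obtain ⟨cl, hcl, rfl⟩ := List.mem_map.mp h
      obtain ⟨hclne, -⟩ := id (hLcyc cl hcl)
      have hqcl : (0:ℝ) < (G.qwt cl : ℝ) := by exact_mod_cast G.qwt_pos hclne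
      refine ⟨div_pos hqcl hw₀R, ?_⟩
      exact subset_convexHull ℝ _ (Set.mem_insert_of_mem _ ⟨cl, hLcyc cl hcl, rfl⟩)
  have hfinal := extremeCombo hconv hu pairs.length pairs le_rfl hmem hsum1 hcomb
    ((G.qwt c₀ : ℝ) / w₀, G.nu c₀)
    (by
      rw [hpairs]
      exact List.mem_append_right _ (by rw [hbody]; exact List.mem_map_of_mem hc₀L))
  exact ⟨c₀, hLcyc c₀ hc₀L, hfinal, hc₀v⟩
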